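/- For all N, M ≥ 1, the Kontsevich bracket satisfies {h^N, h^M}_K ≡ 0 mod [A,A]; i.e., the Hamiltonians π(h^k) are in involution. -/

import Mathlib

open scoped TensorProduct

noncomputable section

abbrev A : Type := MonoidAlgebra ℂ (FreeGroup Bool)

def u : A := MonoidAlgebra.of ℂ (FreeGroup Bool) (FreeGroup.of false)
def v : A := MonoidAlgebra.of ℂ (FreeGroup Bool) (FreeGroup.of true)
def ui : A := MonoidAlgebra.of ℂ (FreeGroup Bool) (FreeGroup.of false)⁻¹
def vi : A := MonoidAlgebra.of ℂ (FreeGroup Bool) (FreeGroup.of true)⁻¹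

/-- The structure of a Kontsevich double bracket on A: a bilinear map
A × A → A ⊗ A satisfying both Leibniz rules and the prescribed values on the
generators u, v. -/
structure KontsevichBracket (db : A →ₗ[ℂ] A →ₗ[ℂ] A ⊗[ℂ] A) : Prop where
  outer : ∀ a b c : A,
    db a (b * c) = db a b * ((1 : A) ⊗ₜ[ℂ] c) + (b ⊗ₜ[ℂ] (1 : A)) * db a c
  inner : ∀ a b c : A,
    db (a * b) c = db a c * (b ⊗ₜ[ℂ] (1 : A)) + ((1 : A) ⊗ₜ[ℂ] a) * db b c
  huv : db u v = -((v * u) ⊗ₜ[ℂ] (1 : A))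
  hvu : db v u = (u * v) ⊗ₜ[ℂ] (1 : A)
  huu : db u u = 0
  hvv : db v v = 0

lemma u_ui : u * ui = 1 := by rw [u, ui, ← map_mul, mul_inv_cancel, map_one]
lemma ui_u : ui * u = 1 := by rw [u, ui, ← map_mul, inv_mul_cancel, map_one]
lemma v_vi : v * vi = 1 := by rw [v, vi, ← map_mul, mul_inv_cancel, map_one]
lemma vi_v : vi * v = 1 := by rw [v, vi, ← map_mul, inv_mul_cancel, map_one]

lemma myneg_mul (x y : A ⊗[ℂ] A) : (-x) * y = -(x*y) := neg_mul x y
lemma mymul_neg (x y : A ⊗[ℂ] A) : x * (-y) = -(x*y) := mul_neg x y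

lemma cancl {x y : A} (hxy : y * x = 1) {Z W : A ⊗[ℂ] A}
    (hh : (x ⊗ₜ[ℂ] (1:A)) * Z = W) : Z = (y ⊗ₜ[ℂ] (1:A)) * W := by
  rw [← hh, ← mul_assoc, Algebra.TensorProduct.tmul_mul_tmul, hxy, mul_one,
    ← Algebra.TensorProduct.one_def, one_mul]

lemma cancr {x y : A} (hxy : x * y = 1) {Z W : A ⊗[ℂ] A}
    (hh : Z * (x ⊗ₜ[ℂ] (1:A)) = W) : Z = W * (y ⊗ₜ[ℂ] (1:A)) := by
  rw [← hh, mul_assoc, Algebra.TensorProduct.tmul_mul_tmul, hxy, mul_one,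
    ← Algebra.TensorProduct.one_def, mul_one]

variable {db : A →ₗ[ℂ] A →ₗ[ℂ] A ⊗[ℂ] A}

lemma db_one_right (hK : KontsevichBracket db) (a : A) : db a 1 = 0 := by
  have h1 := hK.outer a 1 1
  rw [one_mul, ← Algebra.TensorProduct.one_def, mul_one, one_mul] at h1
  exact (right_eq_add.mp h1)

lemma db_one_left (hK : KontsevichBracket db) (a : A) : db 1 a = 0 := by
  have h1 := hK.inner 1 1 a
  rw [one_mul, ← Algebra.TensorProduct.one_def, mul_one, one_mul] at h1
  exact (right_eq_add.mp h1)

lemma db_u_ui (hK : KontsevichBracket db) : db u ui = 0 := by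
  have h1 := hK.outer u u ui
  rw [u_ui, db_one_right hK, hK.huu, zero_mul, zero_add] at h1
  simpa using cancl ui_u h1.symm

lemma db_u_vi (hK : KontsevichBracket db) : db u vi = u ⊗ₜ[ℂ] vi := by
  have h1 := hK.outer u v vi
  simp only [v_vi, db_one_right hK, hK.huv, myneg_mul,
    Algebra.TensorProduct.tmul_mul_tmul, one_mul, mul_one] at h1
  have h2 : (v*u) ⊗ₜ[ℂ] vi = (v ⊗ₜ[ℂ] (1:A)) * db u vi := neg_add_eq_zero.mp h1.symm
  rw [cancl vi_v h2.symm, Algebra.TensorProduct.tmul_mul_tmul, one_mul,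
    ← mul_assoc, vi_v, one_mul]

lemma db_v_ui (hK : KontsevichBracket db) : db v ui = -(v ⊗ₜ[ℂ] ui) := by
  have h1 := hK.outer v u ui
  simp only [u_ui, db_one_right hK, hK.hvu,
    Algebra.TensorProduct.tmul_mul_tmul, one_mul, mul_one] at h1
  have h2 : (u ⊗ₜ[ℂ] (1:A)) * db v ui = -((u*v) ⊗ₜ[ℂ] ui) :=
    eq_neg_of_add_eq_zero_right h1.symm
  rw [cancl ui_u h2, mymul_neg, Algebra.TensorProduct.tmul_mul_tmul, one_mul,
    ← mul_assoc, ui_u, one_mul]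

lemma db_v_vi (hK : KontsevichBracket db) : db v vi = 0 := by
  have h1 := hK.outer v v vi
  rw [v_vi, db_one_right hK, hK.hvv, zero_mul, zero_add] at h1
  simpa using cancl vi_v h1.symm

lemma db_ui_u (hK : KontsevichBracket db) : db ui u = 0 := by
  have h1 := hK.inner ui u u
  rw [ui_u, db_one_left hK, hK.huu, mul_zero, add_zero] at h1
  simpa using cancr u_ui h1.symm

lemma db_ui_v (hK : KontsevichBracket db) : db ui v = v ⊗ₜ[ℂ] ui := by
  have h1 := hK.inner ui u v
  simp only [ui_u, db_one_left hK, hK.huv, mymul_neg, myneg_mul,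
    Algebra.TensorProduct.tmul_mul_tmul, one_mul, mul_one] at h1
  -- h1 : 0 = db ui v * (u ⊗ₜ 1) + -((v*u) ⊗ₜ ui)
  have h2 : db ui v * (u ⊗ₜ[ℂ] (1:A)) = (v*u) ⊗ₜ[ℂ] ui := by
    have := h1.symm
    rw [add_neg_eq_zero] at this
    exact this
  rw [cancr u_ui h2, Algebra.TensorProduct.tmul_mul_tmul, mul_one,
    mul_assoc, u_ui, mul_one]

lemma db_ui_ui (hK : KontsevichBracket db) : db ui ui = 0 := by
  have h1 := hK.outer ui u ui
  rw [u_ui, db_one_right hK, db_ui_u hK, zero_mul, zero_add] at h1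
  simpa using cancl ui_u h1.symm

lemma db_ui_vi (hK : KontsevichBracket db) : db ui vi = -((1:A) ⊗ₜ[ℂ] (ui*vi)) := by
  have h1 := hK.outer ui v vi
  simp only [v_vi, db_one_right hK, db_ui_v hK,
    Algebra.TensorProduct.tmul_mul_tmul, one_mul, mul_one] at h1
  -- h1 : 0 = v ⊗ₜ (ui*vi) + (v ⊗ₜ 1) * db ui vi
  have h2 : (v ⊗ₜ[ℂ] (1:A)) * db ui vi = -(v ⊗ₜ[ℂ] (ui*vi)) :=
    eq_neg_of_add_eq_zero_right h1.symm
  rw [cancl vi_v h2, mymul_neg, Algebra.TensorProduct.tmul_mul_tmul, one_mul, vi_v]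

lemma db_vi_v (hK : KontsevichBracket db) : db vi v = 0 := by
  have h1 := hK.inner vi v v
  rw [vi_v, db_one_left hK, hK.hvv, mul_zero, add_zero] at h1
  simpa using cancr v_vi h1.symm

lemma db_vi_u (hK : KontsevichBracket db) : db vi u = -(u ⊗ₜ[ℂ] vi) := by
  have h1 := hK.inner vi v u
  simp only [vi_v, db_one_left hK, hK.hvu,
    Algebra.TensorProduct.tmul_mul_tmul, one_mul, mul_one] at h1
  have h2 : db vi u * (v ⊗ₜ[ℂ] (1:A)) = -((u*v) ⊗ₜ[ℂ] vi) :=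
    eq_neg_of_add_eq_zero_left h1.symm
  rw [cancr v_vi h2, myneg_mul, Algebra.TensorProduct.tmul_mul_tmul, mul_one,
    mul_assoc, v_vi, mul_one]

lemma db_vi_ui (hK : KontsevichBracket db) : db vi ui = (1:A) ⊗ₜ[ℂ] (vi*ui) := by
  have h1 := hK.outer vi u ui
  simp only [u_ui, db_one_right hK, db_vi_u hK, myneg_mul,
    Algebra.TensorProduct.tmul_mul_tmul, one_mul, mul_one] at h1
  -- h1 : 0 = -(u ⊗ₜ (vi*ui)) + (u ⊗ₜ 1) * db vi ui
  have h2 : u ⊗ₜ[ℂ] (vi*ui) = (u ⊗ₜ[ℂ] (1:A)) * db vi ui := neg_add_eq_zero.mp h1.symm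
  rw [cancl ui_u h2.symm, Algebra.TensorProduct.tmul_mul_tmul, one_mul, ui_u]

lemma db_vi_vi (hK : KontsevichBracket db) : db vi vi = 0 := by
  have h1 := hK.outer vi v vi
  rw [v_vi, db_one_right hK, db_vi_v hK, zero_mul, zero_add] at h1
  simpa using cancl vi_v h1.symm

-- lemmas for w = ui * vi
lemma db_u_w (hK : KontsevichBracket db) : db u (ui*vi) = (1:A) ⊗ₜ[ℂ] vi := by
  rw [hK.outer u ui vi, db_u_ui hK, db_u_vi hK, zero_mul, zero_add,
    Algebra.TensorProduct.tmul_mul_tmul, one_mul, ui_u]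

lemma db_v_w (hK : KontsevichBracket db) : db v (ui*vi) = -(v ⊗ₜ[ℂ] (ui*vi)) := by
  rw [hK.outer v ui vi, db_v_ui hK, db_v_vi hK, mul_zero, add_zero,
    myneg_mul, Algebra.TensorProduct.tmul_mul_tmul, mul_one]

lemma db_ui_w (hK : KontsevichBracket db) : db ui (ui*vi) = -(ui ⊗ₜ[ℂ] (ui*vi)) := by
  rw [hK.outer ui ui vi, db_ui_ui hK, db_ui_vi hK, zero_mul, zero_add,
    mymul_neg, Algebra.TensorProduct.tmul_mul_tmul, mul_one, one_mul]

lemma db_vi_w (hK : KontsevichBracket db) :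
    db vi (ui*vi) = (1:A) ⊗ₜ[ℂ] (vi*ui*vi) := by
  rw [hK.outer vi ui vi, db_vi_ui hK, db_vi_vi hK, mul_zero, add_zero,
    Algebra.TensorProduct.tmul_mul_tmul, one_mul]

lemma db_w_u (hK : KontsevichBracket db) : db (ui*vi) u = -(u ⊗ₜ[ℂ] (ui*vi)) := by
  rw [hK.inner ui vi u, db_ui_u hK, db_vi_u hK, zero_mul, zero_add,
    mymul_neg, Algebra.TensorProduct.tmul_mul_tmul, one_mul]

lemma db_w_v (hK : KontsevichBracket db) : db (ui*vi) v = (1:A) ⊗ₜ[ℂ] ui := by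
  rw [hK.inner ui vi v, db_vi_v hK, mul_zero, add_zero, db_ui_v hK,
    Algebra.TensorProduct.tmul_mul_tmul, mul_one, v_vi]

lemma db_w_ui (hK : KontsevichBracket db) :
    db (ui*vi) ui = (1:A) ⊗ₜ[ℂ] (ui*(vi*ui)) := by
  rw [hK.inner ui vi ui, db_ui_ui hK, db_vi_ui hK, zero_mul, zero_add,
    Algebra.TensorProduct.tmul_mul_tmul, one_mul]

lemma db_w_vi (hK : KontsevichBracket db) :
    db (ui*vi) vi = -(vi ⊗ₜ[ℂ] (ui*vi)) := by
  rw [hK.inner ui vi vi, db_vi_vi hK, mul_zero, add_zero, db_ui_vi hK,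
    myneg_mul, Algebra.TensorProduct.tmul_mul_tmul, one_mul, mul_one]

lemma db_w_w (hK : KontsevichBracket db) :
    db (ui*vi) (ui*vi)
      = (1:A) ⊗ₜ[ℂ] (ui*(vi*ui)*vi) + -((ui*vi) ⊗ₜ[ℂ] (ui*vi)) := by
  rw [hK.outer (ui*vi) ui vi, db_w_ui hK, db_w_vi hK,
    Algebra.TensorProduct.tmul_mul_tmul, mymul_neg,
    Algebra.TensorProduct.tmul_mul_tmul, one_mul, one_mul]

/- STATEMENT 16: For all N, M ≥ 1, {h^N, h^M}_K ≡ 0 mod [A,A]: the Hamiltonians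
π(h^k) are in involution. -/

def h : A := u + v + ui + vi + ui * vi

def commSpan : Submodule ℂ A := Submodule.span ℂ {x : A | ∃ a b : A, x = a * b - b * a}

def Hm (s t : A) : A ⊗[ℂ] A →ₗ[ℂ] A :=
  TensorProduct.lift <| LinearMap.mk₂ ℂ (fun x y => x * s * (y * t))
    (fun x x' y => by simp [add_mul])
    (fun c x y => by simp [smul_mul_assoc])
    (fun x y y' => by simp [add_mul, mul_add])
    (fun c x y => by simp [smul_mul_assoc, mul_smul_comm])

@[simp] lemma Hm_tmul (s t x y : A) : Hm s t (x ⊗ₜ[ℂ] y) = x * s * (y * t) := rfl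

abbrev pq : A →ₗ[ℂ] A ⧸ commSpan := commSpan.mkQ

lemma pc (x y : A) : pq (x * y) = pq (y * x) := by
  rw [← sub_eq_zero, ← map_sub, Submodule.mkQ_apply, Submodule.Quotient.mk_eq_zero]
  exact Submodule.subset_span ⟨x, y, rfl⟩

lemma mul'_eq_Hm : (LinearMap.mul' ℂ A) = Hm 1 1 := by
  apply TensorProduct.ext'
  intro x y
  simp

lemma HmR1 (s t c : A) (Z : A ⊗[ℂ] A) :
    Hm s t (Z * ((1:A) ⊗ₜ[ℂ] c)) = Hm s (c*t) Z := by
  induction Z using TensorProduct.induction_on with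
  | zero => simp
  | tmul x y => simp [Algebra.TensorProduct.tmul_mul_tmul, mul_assoc]
  | add Z W hZ hW => rw [add_mul, map_add, hZ, hW, map_add]

lemma HmR2 (s t q : A) (Z : A ⊗[ℂ] A) :
    Hm s t (Z * (q ⊗ₜ[ℂ] (1:A))) = Hm (q*s) t Z := by
  induction Z using TensorProduct.induction_on with
  | zero => simp
  | tmul x y => simp [Algebra.TensorProduct.tmul_mul_tmul, mul_assoc]
  | add Z W hZ hW => rw [add_mul, map_add, hZ, hW, map_add]

lemma HmL2 (s t p : A) (Z : A ⊗[ℂ] A) :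
    Hm s t (((1:A) ⊗ₜ[ℂ] p) * Z) = Hm (s*p) t Z := by
  induction Z using TensorProduct.induction_on with
  | zero => simp
  | tmul x y => simp [Algebra.TensorProduct.tmul_mul_tmul, mul_assoc]
  | add Z W hZ hW => rw [mul_add, map_add, hZ, hW, map_add]

lemma HmL1 (s t b : A) (Z : A ⊗[ℂ] A) :
    pq (Hm s t ((b ⊗ₜ[ℂ] (1:A)) * Z)) = pq (Hm s (t*b) Z) := by
  induction Z using TensorProduct.induction_on with
  | zero => simp
  | tmul x y =>
      simp only [Algebra.TensorProduct.tmul_mul_tmul, Hm_tmul, one_mul]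
      calc pq (b * x * s * (y * t))
          = pq (b * (x * s * (y * t))) := by simp only [mul_assoc]
        _ = pq ((x * s * (y * t)) * b) := pc _ _
        _ = pq (x * s * (y * (t * b))) := by simp only [mul_assoc]
  | add Z W hZ hW => rw [mul_add, map_add, map_add, hZ, hW, map_add, map_add]

variable (hK : KontsevichBracket db)

lemma claim1 (hK : KontsevichBracket db) (c : A) :
    ∀ n k : ℕ, pq (Hm (h^k) 1 (db (h^(n+1)) c))
      = (n+1) • pq (Hm (h^(n+k)) 1 (db h c)) := by
  intro n
  induction n with
  | zero => intro k; simp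
  | succ n ih =>
      intro k
      have hpow : h^(n+2) = h * h^(n+1) := (pow_succ' h (n+1))
      rw [hpow, hK.inner h (h^(n+1)) c, map_add, map_add, HmR2, HmL2,
        ← pow_add, ← pow_succ, ih (k+1)]
      rw [show n+1+k = n+(k+1) by omega]
      rw [succ_nsmul ((pq) (Hm (h ^ (n + (k+1))) 1 (db h c))) (n+1)]
      ring_nf
      abel

lemma claim2 (hK : KontsevichBracket db) (s : A) :
    ∀ m k : ℕ, pq (Hm s (h^k) (db h (h^(m+1))))
      = (m+1) • pq (Hm s (h^(m+k)) (db h h)) := by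
  intro m
  induction m with
  | zero => intro k; simp
  | succ m ih =>
      intro k
      have hpow : h^(m+2) = h * h^(m+1) := (pow_succ' h (m+1))
      rw [hpow, hK.outer h h (h^(m+1)), map_add, map_add, HmR1, HmL1,
        ← pow_add, ← pow_succ, ih (k+1)]
      rw [show m+1+k = m+(k+1) by omega]
      rw [succ_nsmul ((pq) (Hm s (h ^ (m + (k+1))) (db h h))) (m+1)]
      abel

lemma cuui (x : A) : u * (ui * x) = x := by rw [← mul_assoc, u_ui, one_mul]
lemma cuiu (x : A) : ui * (u * x) = x := by rw [← mul_assoc, ui_u, one_mul]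
lemma cvvi (x : A) : v * (vi * x) = x := by rw [← mul_assoc, v_vi, one_mul]
lemma cviv (x : A) : vi * (v * x) = x := by rw [← mul_assoc, vi_v, one_mul]

lemma e0 : u*v - v*u + ui + vi*ui + ui*(vi*ui) - ui*vi + vi + vi*ui*vi + ui*(vi*ui)*vi
    - h*(ui*vi) = h*(v+ui) - (v+ui)*h := by
  simp only [h, mul_add, add_mul, mul_assoc, cuui, cuiu, cvvi, cviv,
    u_ui, ui_u, v_vi, vi_v, mul_one, one_mul]
  abel

lemma step2 (hK : KontsevichBracket db) (n m : ℕ) :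
    pq (Hm (h^n) (h^m) (db h h)) = 0 := by
  set s : A := h^n with hs
  set t : A := h^m with ht
  have hts : t * s = s * t := by
    rw [hs, ht, ← pow_add, ← pow_add, Nat.add_comm]
  have hgh : (s*t)*h = h*(s*t) := by
    rw [hs, ht, ← pow_add, ← pow_succ, ← pow_succ', pow_add]
  have hths : t*(h*s) = h*(s*t) := by
    rw [hs, ht, ← pow_succ', ← pow_add, ← pow_add, ← pow_succ']
    congr 1
    omega
  have hrule2 : ∀ y : A, pq (s*(y*t)) = pq (y*(s*t)) := by
    intro y
    calc pq (s*(y*t)) = pq ((y*t)*s) := pc _ _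
      _ = pq (y*(t*s)) := by rw [mul_assoc]
      _ = pq (y*(s*t)) := by rw [hts]
  have hbig : pq (h*(s*(ui*vi*t))) = pq ((h*(ui*vi))*(s*t)) := by
    calc pq (h*(s*(ui*vi*t))) = pq ((h*s)*(ui*vi*t)) := by rw [← mul_assoc h s]
      _ = pq ((ui*vi*t)*(h*s)) := pc _ _
      _ = pq ((ui*vi)*(t*(h*s))) := by simp only [mul_assoc]
      _ = pq ((ui*vi)*(h*(s*t))) := by rw [hths]
      _ = pq ((ui*vi)*((s*t)*h)) := by rw [hgh]
      _ = pq (((ui*vi)*(s*t))*h) := by simp only [mul_assoc]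
      _ = pq (h*((ui*vi)*(s*t))) := pc _ _
      _ = pq ((h*(ui*vi))*(s*t)) := by simp only [mul_assoc]
  have e1' : pq ((h*(v+ui))*(s*t)) = pq (((v+ui)*h)*(s*t)) := by
    calc pq ((h*(v+ui))*(s*t)) = pq (h*((v+ui)*(s*t))) := by simp only [mul_assoc]
      _ = pq (((v+ui)*(s*t))*h) := pc _ _
      _ = pq ((v+ui)*((s*t)*h)) := by simp only [mul_assoc]
      _ = pq ((v+ui)*(h*(s*t))) := by rw [hgh]
      _ = pq (((v+ui)*h)*(s*t)) := by simp only [mul_assoc]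
  have hD : Hm s t (db h h)
      = u*v*(s*t) - v*u*(s*t) + s*(ui*t) + s*(vi*ui*t) + s*(ui*(vi*ui)*t)
        - s*(ui*vi*t) + s*(vi*t) + s*(vi*ui*vi*t) + s*(ui*(vi*ui)*vi*t)
        - h*(s*(ui*vi*t)) := by
    rw [show (h:A) = u + v + ui + vi + ui*vi from rfl]
    simp only [map_add, LinearMap.add_apply, hK.huu, hK.huv, hK.hvu, hK.hvv,
      db_u_ui hK, db_u_vi hK, db_u_w hK, db_v_ui hK, db_v_vi hK, db_v_w hK,
      db_ui_u hK, db_ui_v hK, db_ui_ui hK, db_ui_vi hK, db_ui_w hK,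
      db_vi_u hK, db_vi_v hK, db_vi_ui hK, db_vi_vi hK, db_vi_w hK,
      db_w_u hK, db_w_v hK, db_w_ui hK, db_w_vi hK, db_w_w hK,
      map_neg, map_zero, Hm_tmul, add_zero, zero_add, one_mul, mul_one,
      mul_add, add_mul, mul_assoc]
    abel
  rw [hD]
  simp only [map_add, map_sub]
  rw [hrule2 ui, hrule2 (vi*ui), hrule2 (ui*(vi*ui)), hrule2 (ui*vi), hrule2 vi,
    hrule2 (vi*ui*vi), hrule2 (ui*(vi*ui)*vi), hbig]
  have hcol : pq (u * v * (s * t)) - pq (v * u * (s * t)) + pq (ui * (s * t))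
        + pq (vi * ui * (s * t)) + pq (ui * (vi * ui) * (s * t)) - pq (ui * vi * (s * t))
        + pq (vi * (s * t)) + pq (vi * ui * vi * (s * t)) + pq (ui * (vi * ui) * vi * (s * t))
        - pq (h * (ui * vi) * (s * t))
      = pq ((u*v - v*u + ui + vi*ui + ui*(vi*ui) - ui*vi + vi + vi*ui*vi
          + ui*(vi*ui)*vi - h*(ui*vi)) * (s*t)) := by
    simp only [sub_mul, add_mul, map_add, map_sub]
  rw [hcol, e0, sub_mul, map_sub, e1', sub_self]

theorem kontsevich_hamiltonians_in_involution
    (db : A →ₗ[ℂ] A →ₗ[ℂ] A ⊗[ℂ] A) (hK : KontsevichBracket db) :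
    ∀ N M : ℕ, 1 ≤ N → 1 ≤ M →
      LinearMap.mul' ℂ A (db (h ^ N) (h ^ M)) ∈ commSpan := by
  intro N M hN hM
  obtain ⟨n, rfl⟩ := Nat.exists_eq_add_of_le hN
  obtain ⟨m, rfl⟩ := Nat.exists_eq_add_of_le hM
  have key : pq (LinearMap.mul' ℂ A (db (h^(1+n)) (h^(1+m)))) = 0 := by
    rw [mul'_eq_Hm]
    calc pq (Hm 1 1 (db (h^(1+n)) (h^(1+m))))
        = pq (Hm (h^(0:ℕ)) 1 (db (h^(n+1)) (h^(m+1)))) := by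
          rw [pow_zero, Nat.add_comm 1 n, Nat.add_comm 1 m]
      _ = (n+1) • pq (Hm (h^(n+0)) 1 (db h (h^(m+1)))) := claim1 hK (h^(m+1)) n 0
      _ = (n+1) • pq (Hm (h^n) (h^(0:ℕ)) (db h (h^(m+1)))) := by
          norm_num
      _ = (n+1) • ((m+1) • pq (Hm (h^n) (h^(m+0)) (db h h))) := by
          rw [claim2 hK (h^n) m 0]
      _ = 0 := by simp [step2 hK]
  rw [← Submodule.Quotient.mk_eq_zero, ← Submodule.mkQ_apply]
  exact key
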